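/- Let G be a Borel probability measure on ℝ² and d < 1 a real number, and suppose there exists x with 0 < x < (1−d)/2 such that the joint CDF satisfies G(x, x) > 0. Then there exists an offer s* ∈ S that maximizes π(·, G, d) over S. -/

import Mathlib

open MeasureTheory Filter Topology

noncomputable section

/-- The unit simplex of offers `(s_A, s_B, s_C)`. -/
def SimplexS : Set (ℝ × ℝ × ℝ) :=
  {s | 0 ≤ s.1 ∧ 0 ≤ s.2.1 ∧ 0 ≤ s.2.2 ∧ s.1 + s.2.1 + s.2.2 = 1}

/-- Acceptance probability `Λ(b, c, G) = G({(τB, τC) : τB ≤ b or τC ≤ c})`. -/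
def Lam (b c : ℝ) (G : Measure (ℝ × ℝ)) : ℝ :=
  (G {p : ℝ × ℝ | p.1 ≤ b ∨ p.2 ≤ c}).toReal

/-- Joint CDF `G(x, y) = G((−∞, x] × (−∞, y])`. -/
def jointCDF (G : Measure (ℝ × ℝ)) (x y : ℝ) : ℝ :=
  (G (Set.Iic x ×ˢ Set.Iic y)).toReal

/-- Proposer's expected payoff `π(s, G, d) = d + (s_A − d)·Λ(s_B, s_C, G)`. -/
def pay (s : ℝ × ℝ × ℝ) (G : Measure (ℝ × ℝ)) (d : ℝ) : ℝ :=
  d + (s.1 - d) * Lam s.2.1 s.2.2 G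

/-- Modified payoff `π̂(s, G, d) = d + max{s_A − d, 0}·Λ(s_B, s_C, G)`. -/
def payHat (s : ℝ × ℝ × ℝ) (G : Measure (ℝ × ℝ)) (d : ℝ) : ℝ :=
  d + max (s.1 - d) 0 * Lam s.2.1 s.2.2 G

/-- The uniform distribution on `[0, τ]`. -/
def uniformIcc (τ : ℝ) : Measure ℝ :=
  (ENNReal.ofReal τ)⁻¹ • volume.restrict (Set.Icc 0 τ)

/-- Weak convergence of measures: convergence of integrals of all bounded continuous
functions. -/
def WeakLim (Hn : ℕ → Measure (ℝ × ℝ)) (H : Measure (ℝ × ℝ)) : Prop :=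
  ∀ f : BoundedContinuousFunction (ℝ × ℝ) ℝ,
    Tendsto (fun n => ∫ p, f p ∂(Hn n)) atTop (nhds (∫ p, f p ∂H))

/-! ### Auxiliary lemmas -/

lemma lam_nonneg (b c : ℝ) (G : Measure (ℝ × ℝ)) : 0 ≤ Lam b c G :=
  ENNReal.toReal_nonneg

lemma lam_le_one (b c : ℝ) (G : Measure (ℝ × ℝ)) [IsProbabilityMeasure G] :
    Lam b c G ≤ 1 := by
  have h := measure_mono (μ := G) (Set.subset_univ {p : ℝ × ℝ | p.1 ≤ b ∨ p.2 ≤ c})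
  rw [measure_univ] at h
  exact ENNReal.toReal_le_of_le_ofReal one_pos.le (by simpa using h)

lemma lam_mono {b c b' c' : ℝ} (hb : b ≤ b') (hc : c ≤ c') (G : Measure (ℝ × ℝ))
    [IsFiniteMeasure G] : Lam b c G ≤ Lam b' c' G := by
  apply ENNReal.toReal_mono (measure_ne_top G _)
  exact measure_mono fun p hp => hp.imp (fun h => h.trans hb) (fun h => h.trans hc)

lemma lamP_usc (G : Measure (ℝ × ℝ)) [IsProbabilityMeasure G] :
    UpperSemicontinuous (fun q : ℝ × ℝ => Lam q.1 q.2 G) := by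
  intro q y hy
  obtain ⟨b, c⟩ := q
  simp only at hy ⊢
  set A : ℕ → Set (ℝ × ℝ) := fun n => {p | p.1 ≤ b + 1 / (n + 1) ∨ p.2 ≤ c + 1 / (n + 1)}
    with hA
  have hclosed : ∀ n, IsClosed (A n) := fun n =>
    (isClosed_le continuous_fst continuous_const).union
      (isClosed_le continuous_snd continuous_const)
  have hanti : Antitone A := by
    intro n m hnm p hp
    have h1 : (1 : ℝ) / (m + 1) ≤ 1 / (n + 1) := by
      apply one_div_le_one_div_of_le (by positivity)
      have : (n : ℝ) ≤ m := by exact_mod_cast hnm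
      linarith
    exact hp.imp (fun h => h.trans (by linarith)) (fun h => h.trans (by linarith))
  have hiInter : ⋂ n, A n = {p : ℝ × ℝ | p.1 ≤ b ∨ p.2 ≤ c} := by
    ext p
    simp only [Set.mem_iInter, hA, Set.mem_setOf_eq]
    constructor
    · intro h
      by_contra hc'
      push_neg at hc'
      obtain ⟨h1, h2⟩ := hc'
      obtain ⟨n, hn⟩ := exists_nat_one_div_lt (lt_min (sub_pos.2 h1) (sub_pos.2 h2))
      rcases h n with h' | h'
      · have := lt_of_lt_of_le hn (min_le_left _ _); linarith
      · have := lt_of_lt_of_le hn (min_le_right _ _); linarith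
    · intro h n
      have hpos : (0 : ℝ) < 1 / (n + 1) := by positivity
      exact h.imp (fun h' => by linarith) (fun h' => by linarith)
  have htend := tendsto_measure_iInter_atTop (μ := G)
    (fun n => (hclosed n).measurableSet.nullMeasurableSet) hanti ⟨0, measure_ne_top G _⟩
  rw [hiInter] at htend
  have htend2 : Tendsto (fun n => (G (A n)).toReal) atTop (𝓝 (Lam b c G)) :=
    (ENNReal.tendsto_toReal (measure_ne_top G _)).comp htend
  obtain ⟨n, hn⟩ := (htend2.eventually_lt_const hy).exists
  have hopen : IsOpen {q' : ℝ × ℝ | q'.1 < b + 1 / (n + 1) ∧ q'.2 < c + 1 / (n + 1)} :=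
    (isOpen_lt continuous_fst continuous_const).inter
      (isOpen_lt continuous_snd continuous_const)
  have hpos : (0 : ℝ) < 1 / (n + 1) := by positivity
  have hmem : (b, c) ∈ {q' : ℝ × ℝ | q'.1 < b + 1 / (n + 1) ∧ q'.2 < c + 1 / (n + 1)} :=
    ⟨by simp; linarith, by simp; linarith⟩
  filter_upwards [hopen.mem_nhds hmem] with q' hq'
  calc Lam q'.1 q'.2 G ≤ (G (A n)).toReal := by
        apply ENNReal.toReal_mono (measure_ne_top G _)
        apply measure_mono
        exact fun p hp => hp.imp (fun h => h.trans hq'.1.le) (fun h => h.trans hq'.2.le)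
    _ < y := hn

lemma payHat_usc (G : Measure (ℝ × ℝ)) [IsProbabilityMeasure G] (d : ℝ) :
    UpperSemicontinuous (fun s => payHat s G d) := by
  have hlam : UpperSemicontinuous (fun s : ℝ × ℝ × ℝ => Lam s.2.1 s.2.2 G) :=
    UpperSemicontinuous.comp (f := fun q : ℝ × ℝ => Lam q.1 q.2 G) (g := Prod.snd) (lamP_usc G) continuous_snd
  intro x y hy
  set L := Lam x.2.1 x.2.2 G with hL
  set g0 := max (x.1 - d) 0 with hg0
  have hyL : d + g0 * L < y := hy
  have hcont : Tendsto (fun ε : ℝ => d + (g0 + ε) * (L + ε)) (𝓝 0) (𝓝 (d + g0 * L)) := by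
    have : Continuous (fun ε : ℝ => d + (g0 + ε) * (L + ε)) := by continuity
    simpa using this.tendsto 0
  have hev : ∀ᶠ ε in 𝓝[>] (0 : ℝ), d + (g0 + ε) * (L + ε) < y :=
    ((hcont.mono_left nhdsWithin_le_nhds).eventually_lt_const hyL)
  obtain ⟨ε, hεy, hεpos⟩ := (hev.and self_mem_nhdsWithin).exists
  have hg : ∀ᶠ s : ℝ × ℝ × ℝ in 𝓝 x, max (s.1 - d) 0 < g0 + ε := by
    have hc : ContinuousAt (fun s : ℝ × ℝ × ℝ => max (s.1 - d) 0) x :=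
      ((continuous_fst.sub continuous_const).max continuous_const).continuousAt
    exact hc.eventually_lt_const (by simp only [← hg0]; linarith [hεpos])
  have hl : ∀ᶠ s : ℝ × ℝ × ℝ in 𝓝 x, Lam s.2.1 s.2.2 G < L + ε :=
    hlam x (L + ε) (by linarith [hεpos])
  filter_upwards [hg, hl] with s hs1 hs2
  have : max (s.1 - d) 0 * Lam s.2.1 s.2.2 G < (g0 + ε) * (L + ε) :=
    mul_lt_mul'' hs1 hs2 (le_max_right _ _) (lam_nonneg _ _ _)
  calc payHat s G d = d + max (s.1 - d) 0 * Lam s.2.1 s.2.2 G := rfl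
    _ < d + (g0 + ε) * (L + ε) := by linarith
    _ < y := hεy

lemma simplex_compact : IsCompact SimplexS := by
  have hclosed : IsClosed SimplexS := by
    have h1 : IsClosed {s : ℝ × ℝ × ℝ | 0 ≤ s.1} := isClosed_le continuous_const continuous_fst
    have h2 : IsClosed {s : ℝ × ℝ × ℝ | 0 ≤ s.2.1} :=
      isClosed_le continuous_const (continuous_fst.comp continuous_snd)
    have h3 : IsClosed {s : ℝ × ℝ × ℝ | 0 ≤ s.2.2} :=
      isClosed_le continuous_const (continuous_snd.comp continuous_snd)
    have h4 : IsClosed {s : ℝ × ℝ × ℝ | s.1 + s.2.1 + s.2.2 = 1} :=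
      isClosed_eq ((continuous_fst.add (continuous_fst.comp continuous_snd)).add (continuous_snd.comp continuous_snd)) continuous_const
    have : SimplexS = {s : ℝ × ℝ × ℝ | 0 ≤ s.1} ∩ ({s | 0 ≤ s.2.1} ∩ ({s | 0 ≤ s.2.2} ∩
        {s | s.1 + s.2.1 + s.2.2 = 1})) := by
      rfl
    rw [this]
    exact h1.inter (h2.inter (h3.inter h4))
  have hsub : SimplexS ⊆ Set.Icc ((0 : ℝ), ((0 : ℝ), (0 : ℝ))) (1, (1, 1)) := by
    rintro ⟨a, b, c⟩ ⟨ha, hb, hc, hsum⟩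
    simp only at ha hb hc hsum
    constructor <;> constructor
    · exact ha
    · exact ⟨hb, hc⟩
    · simp only []; linarith
    · exact ⟨by simp only []; linarith, by simp only []; linarith⟩
  exact isCompact_Icc.of_isClosed_subset hclosed hsub

lemma usc_exists_max {f : ℝ × ℝ × ℝ → ℝ} (hf : UpperSemicontinuous f)
    {K : Set (ℝ × ℝ × ℝ)} (hK : IsCompact K) (hne : K.Nonempty)
    (hb : BddAbove (f '' K)) : ∃ s ∈ K, ∀ s' ∈ K, f s' ≤ f s := by
  set M := sSup (f '' K) with hM
  set T : ℕ → Set (ℝ × ℝ × ℝ) := fun n => K ∩ f ⁻¹' Set.Ici (M - 1 / (n + 1)) with hT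
  have hTne : ∀ n, (T n).Nonempty := by
    intro n
    have hlt : M - 1 / (n + 1) < M := by
      have : (0 : ℝ) < 1 / (n + 1) := by positivity
      linarith
    obtain ⟨y, hy, hylt⟩ := exists_lt_of_lt_csSup (hne.image f) hlt
    obtain ⟨x, hx, rfl⟩ := hy
    exact ⟨x, hx, hylt.le⟩
  have hTclosed : ∀ n, IsClosed (T n) := fun n =>
    hK.isClosed.inter (hf.isClosed_preimage _)
  have hTsub : ∀ n, T (n + 1) ⊆ T n := by
    intro n x hx
    refine ⟨hx.1, ?_⟩
    have h2 := hx.2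
    simp only [Set.mem_preimage, Set.mem_Ici] at h2 ⊢
    have hhalf : (1 : ℝ) / ((n : ℝ) + 1 + 1) ≤ 1 / ((n : ℝ) + 1) := by
      apply one_div_le_one_div_of_le (by positivity)
      linarith
    push_cast at h2 ⊢
    linarith
  have hTcompact : IsCompact (T 0) := hK.inter_right (hf.isClosed_preimage _)
  obtain ⟨x, hx⟩ := IsCompact.nonempty_iInter_of_sequence_nonempty_isCompact_isClosed
    T hTsub hTne hTcompact hTclosed
  simp only [Set.mem_iInter] at hx
  refine ⟨x, (hx 0).1, fun s' hs' => ?_⟩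
  have hMle : M ≤ f x := by
    have htend : Tendsto (fun n : ℕ => M - 1 / (n + 1 : ℝ)) atTop (𝓝 M) := by
      have h0 : Tendsto (fun n : ℕ => 1 / (n + 1 : ℝ)) atTop (𝓝 0) :=
        tendsto_one_div_add_atTop_nhds_zero_nat
      simpa using tendsto_const_nhds.sub h0
    exact le_of_tendsto htend (Filter.Eventually.of_forall fun n => (hx n).2)
  exact le_trans (le_csSup hb ⟨s', hs', rfl⟩) hMle

theorem stmt7
    (G : Measure (ℝ × ℝ)) (hGprob : IsProbabilityMeasure G)
    (d : ℝ) (hd : d < 1)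
    (hx : ∃ x : ℝ, 0 < x ∧ x < (1 - d) / 2 ∧ 0 < jointCDF G x x) :
    ∃ s ∈ SimplexS, ∀ s' ∈ SimplexS, pay s' G d ≤ pay s G d := by
  obtain ⟨x, hxpos, hxlt, hxcdf⟩ := hx
  -- basic facts
  have hpay_le : ∀ s : ℝ × ℝ × ℝ, pay s G d ≤ payHat s G d := by
    intro s
    unfold pay payHat
    have h := mul_le_mul_of_nonneg_right (le_max_left (s.1 - d) 0) (lam_nonneg s.2.1 s.2.2 G)
    linarith
  have hpayHat_ge : ∀ s : ℝ × ℝ × ℝ, d ≤ payHat s G d := by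
    intro s
    unfold payHat
    have h1 := lam_nonneg s.2.1 s.2.2 G
    have h2 : (0:ℝ) ≤ max (s.1 - d) 0 := le_max_right _ _
    nlinarith
  -- bounded above on the simplex
  have hbdd : BddAbove ((fun s => payHat s G d) '' SimplexS) := by
    refine ⟨d + max (1 - d) 0 * 1, ?_⟩
    rintro _ ⟨s, hs, rfl⟩
    obtain ⟨ha, hb, hc, hsum⟩ := hs
    have h1 : s.1 ≤ 1 := by linarith
    have hmax : max (s.1 - d) 0 ≤ max (1 - d) 0 := max_le_max (by linarith) le_rfl
    have hl1 := lam_le_one s.2.1 s.2.2 G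
    have hl0 := lam_nonneg s.2.1 s.2.2 G
    have h2 : (0:ℝ) ≤ max (s.1 - d) 0 := le_max_right _ _
    have h3 : (0:ℝ) ≤ max (1 - d) 0 := le_max_right _ _
    have hm := mul_le_mul hmax hl1 hl0 h3
    unfold payHat
    simp only []
    linarith
  have hne : SimplexS.Nonempty := ⟨(1, 0, 0), ⟨zero_le_one, le_rfl, le_rfl, by norm_num⟩⟩
  obtain ⟨t, htS, htmax⟩ := usc_exists_max (payHat_usc G d) simplex_compact hne hbdd
  by_cases hcase : d < payHat t G d
  · -- the maximizer of payHat has t.1 > d, hence pay t = payHat t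
    have hprod : 0 < max (t.1 - d) 0 * Lam t.2.1 t.2.2 G := by
      unfold payHat at hcase; linarith
    have ht1 : 0 < max (t.1 - d) 0 := by
      by_contra h
      push_neg at h
      have : max (t.1 - d) 0 = 0 := le_antisymm h (le_max_right _ _)
      rw [this, zero_mul] at hprod
      exact lt_irrefl 0 hprod
    have htd : d < t.1 := by
      by_contra h
      push_neg at h
      have : max (t.1 - d) 0 = 0 := max_eq_right (by linarith)
      rw [this] at ht1
      exact lt_irrefl 0 ht1
    have hpt : pay t G d = payHat t G d := by
      unfold pay payHat
      rw [max_eq_left (by linarith)]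
    exact ⟨t, htS, fun s' hs' => by
      calc pay s' G d ≤ payHat s' G d := hpay_le s'
        _ ≤ payHat t G d := htmax s' hs'
        _ = pay t G d := hpt.symm⟩
  · -- payHat ≡ d on the simplex; show this forces d ≥ 0 to be false... split on sign of d
    push_neg at hcase
    have hMeq : payHat t G d = d := le_antisymm hcase (hpayHat_ge t)
    -- show d < 0 (otherwise the offer (1-2x, x, x) contradicts hMeq)
    have hdneg : d < 0 := by
      by_contra hd0
      push_neg at hd0
      have hxhalf : x < 1 / 2 := by linarith
      set s0 : ℝ × ℝ × ℝ := (1 - 2 * x, x, x) with hs0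
      have hs0S : s0 ∈ SimplexS := by
        refine ⟨by simp only [hs0]; linarith, hxpos.le, hxpos.le, by simp only [hs0]; ring⟩
      have hlam : jointCDF G x x ≤ Lam x x G := by
        apply ENNReal.toReal_mono (measure_ne_top G _)
        apply measure_mono
        rintro ⟨p1, p2⟩ ⟨h1, h2⟩
        exact Or.inl h1
      have hgt : d < payHat s0 G d := by
        have hcoef : 0 < 1 - 2 * x - d := by linarith
        have : payHat s0 G d = d + max (1 - 2 * x - d) 0 * Lam x x G := rfl
        rw [this, max_eq_left hcoef.le]
        nlinarith
      have := htmax s0 hs0S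
      linarith [hMeq ▸ this]
    -- d < 0 : every point of the simplex has Lam = 0, hence pay ≡ d; any point works
    have hall : ∀ s ∈ SimplexS, pay s G d = d := by
      intro s hs
      have h1 : payHat s G d = d := le_antisymm (by linarith [htmax s hs, hMeq]) (hpayHat_ge s)
      have hs1 : 0 ≤ s.1 := hs.1
      have hmax : max (s.1 - d) 0 = s.1 - d := max_eq_left (by linarith)
      have hprod : max (s.1 - d) 0 * Lam s.2.1 s.2.2 G = 0 := by
        unfold payHat at h1; linarith
      rw [hmax] at hprod
      have hlam0 : Lam s.2.1 s.2.2 G = 0 := by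
        rcases mul_eq_zero.1 hprod with h | h
        · exfalso; linarith
        · exact h
      unfold pay
      rw [hlam0, mul_zero, add_zero]
    have h100 : ((1:ℝ), (0:ℝ), (0:ℝ)) ∈ SimplexS :=
      ⟨zero_le_one, le_rfl, le_rfl, by norm_num⟩
    refine ⟨(1, 0, 0), h100, fun s' hs' => ?_⟩
    rw [hall _ hs', hall _ h100]
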